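/- Let F be convex, let (x*, r̂) be a saddle point of the Lagrangian L(x,r) = F(x) + c rᵀQx (so F(x*) ≤ F(x) + c r̂ᵀQx for all x, and Qx* = 0). If a point x̂ satisfies F(x̂) − F(x*) + c rᵀQx̂ ≤ B(r) for all r, where B(r) = (c/(2T))(‖x(0)−x*‖²_{M'} + ‖r(0) − r‖²), then |F(x̂) − F(x*)| ≤ (c/(2T))(‖x(0)−x*‖²_{M'} + max{‖r(0) − 2r̂‖², ‖r(0)‖²}). -/

import Mathlib

open Matrix

theorem stmt11 (n : ℕ) (F : (Fin n → ℝ) → ℝ) (hF : ConvexOn ℝ Set.univ F)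
    (Q M' : Matrix (Fin n) (Fin n) ℝ) (hQ : Q.PosSemidef) (hM : M'.PosSemidef)
    (c T : ℝ) (hc : 0 < c) (hT : 0 < T)
    (xs rhat xhat x0 r0 : Fin n → ℝ)
    (hfeas : Q.mulVec xs = 0)
    (hsaddle : ∀ x : Fin n → ℝ, F xs ≤ F x + c * (rhat ⬝ᵥ Q.mulVec x))
    (hbound : ∀ r : Fin n → ℝ,
      F xhat - F xs + c * (r ⬝ᵥ Q.mulVec xhat) ≤
        c / (2 * T) * ((x0 - xs) ⬝ᵥ M'.mulVec (x0 - xs) + ∑ i, (r0 i - r i) ^ 2)) :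
    |F xhat - F xs| ≤
      c / (2 * T) * ((x0 - xs) ⬝ᵥ M'.mulVec (x0 - xs) +
        max (∑ i, (r0 i - 2 * rhat i) ^ 2) (∑ i, (r0 i) ^ 2)) := by
  set X := (x0 - xs) ⬝ᵥ M'.mulVec (x0 - xs) with hX
  set S2 := ∑ i, (r0 i - 2 * rhat i) ^ 2 with hS2
  set S0 := ∑ i, (r0 i) ^ 2 with hS0
  have hk : 0 ≤ c / (2 * T) := by positivity
  have h0 := hbound 0
  have h2 := hbound (fun i => 2 * rhat i)
  have hz : (0 : Fin n → ℝ) ⬝ᵥ Q.mulVec xhat = 0 := by simp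
  have hd2 : (fun i => 2 * rhat i) ⬝ᵥ Q.mulVec xhat = 2 * (rhat ⬝ᵥ Q.mulVec xhat) := by
    simp [dotProduct, Finset.mul_sum, mul_assoc]
  rw [hz] at h0
  rw [hd2] at h2
  simp only [Pi.zero_apply, sub_zero] at h0
  have hs := hsaddle xhat
  have hB2 : c / (2 * T) * (X + S2) ≤ c / (2 * T) * (X + max S2 S0) :=
    mul_le_mul_of_nonneg_left (add_le_add_right (le_max_left _ _) X) hk
  have hB0 : c / (2 * T) * (X + S0) ≤ c / (2 * T) * (X + max S2 S0) :=
    mul_le_mul_of_nonneg_left (add_le_add_right (le_max_right _ _) X) hk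
  rw [abs_le]
  constructor
  · linarith
  · linarith
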